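/- Suppose for each n the constant C_n satisfies C_n ≤ 1 and ∏_{i=1}^n x_i + C_n lies in the quadratic module M generated by g_i(x) = x_i(1-x_i), i=1,…,n (with degree bound 2⌈n/2⌉). Define C'_n := ∑_{i=1}^n C_i. Then for every n ≥ 1, 1 - ∏_{i=1}^n x_i + C'_n lies in the quadratic module generated by g₁,…,g_n (with degree bound 2⌈n/2⌉). -/

import Mathlib

open MvPolynomial

/-- `p` is a sum of squares of polynomials. -/
def IsSOS {n : ℕ} (p : MvPolynomial (Fin n) ℝ) : Prop :=
  ∃ (k : ℕ) (q : Fin k → MvPolynomial (Fin n) ℝ), p = ∑ i, q i ^ 2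

/-- Membership in the degree-`r` truncated quadratic module generated by
`gᵢ = Xᵢ(1-Xᵢ)`, `i = 1,…,n`. -/
def InQM (n r : ℕ) (p : MvPolynomial (Fin n) ℝ) : Prop :=
  ∃ (σ₀ : MvPolynomial (Fin n) ℝ) (σ : Fin n → MvPolynomial (Fin n) ℝ),
    IsSOS σ₀ ∧ (∀ i, IsSOS (σ i)) ∧
    σ₀.totalDegree ≤ r ∧
    (∀ i, (σ i * (X i * (1 - X i))).totalDegree ≤ r) ∧
    p = σ₀ + ∑ i, σ i * (X i * (1 - X i))

lemma isSOS_zero {n : ℕ} : IsSOS (0 : MvPolynomial (Fin n) ℝ) :=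
  ⟨0, Fin.elim0, by simp⟩

lemma isSOS_add {n : ℕ} {p q : MvPolynomial (Fin n) ℝ} (hp : IsSOS p) (hq : IsSOS q) :
    IsSOS (p + q) := by
  obtain ⟨k, f, rfl⟩ := hp
  obtain ⟨l, g, rfl⟩ := hq
  exact ⟨k + l, Fin.append f g, by rw [Fin.sum_univ_add]; simp⟩

lemma isSOS_map {n m : ℕ} (φ : MvPolynomial (Fin n) ℝ →ₐ[ℝ] MvPolynomial (Fin m) ℝ)
    {p : MvPolynomial (Fin n) ℝ} (hp : IsSOS p) : IsSOS (φ p) := by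
  obtain ⟨k, f, rfl⟩ := hp
  exact ⟨k, fun i => φ (f i), by simp [map_sum, map_pow]⟩

lemma inQM_add {n r : ℕ} {p q : MvPolynomial (Fin n) ℝ} (hp : InQM n r p) (hq : InQM n r q) :
    InQM n r (p + q) := by
  obtain ⟨a, s, ha, hs, hda, hds, rfl⟩ := hp
  obtain ⟨b, t, hb, ht, hdb, hdt, rfl⟩ := hq
  refine ⟨a + b, fun i => s i + t i, isSOS_add ha hb, fun i => isSOS_add (hs i) (ht i),
    le_trans (totalDegree_add a b) (max_le hda hdb), fun i => ?_, ?_⟩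
  · rw [add_mul]
    exact le_trans (totalDegree_add _ _) (max_le (hds i) (hdt i))
  · rw [Finset.sum_congr rfl (fun i _ => add_mul (s i) (t i) _), Finset.sum_add_distrib]
    ring

lemma inQM_mono {n r r' : ℕ} (h : r ≤ r') {p : MvPolynomial (Fin n) ℝ} (hp : InQM n r p) :
    InQM n r' p := by
  obtain ⟨a, s, ha, hs, hda, hds, rfl⟩ := hp
  exact ⟨a, s, ha, hs, hda.trans h, fun i => (hds i).trans h, rfl⟩

/-- Degree bound for substitutions by polynomials of total degree ≤ 1. -/
lemma totalDegree_aeval_le {n m : ℕ} (f : Fin n → MvPolynomial (Fin m) ℝ)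
    (hf : ∀ i, (f i).totalDegree ≤ 1) (p : MvPolynomial (Fin n) ℝ) :
    (aeval f p).totalDegree ≤ p.totalDegree := by
  conv_lhs => rw [p.as_sum]
  rw [map_sum]
  refine le_trans (totalDegree_finset_sum _ _) (Finset.sup_le fun v hv => ?_)
  rw [aeval_monomial]
  refine le_trans (totalDegree_mul _ _) ?_
  have h1 : (algebraMap ℝ (MvPolynomial (Fin m) ℝ) (coeff v p)).totalDegree = 0 :=
    totalDegree_C _
  rw [h1, zero_add]
  have h2 : (v.prod fun i k => f i ^ k).totalDegree ≤ v.sum fun _ k => k := by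
    refine le_trans (totalDegree_finset_prod _ _) ?_
    refine Finset.sum_le_sum fun i _ => ?_
    calc (f i ^ v i).totalDegree ≤ v i * (f i).totalDegree := totalDegree_pow _ _
      _ ≤ v i * 1 := Nat.mul_le_mul_left _ (hf i)
      _ = v i := mul_one _
  exact h2.trans (le_totalDegree hv)

lemma inQM_rename {n r : ℕ} {p : MvPolynomial (Fin n) ℝ} (hp : InQM n r p) :
    InQM (n + 1) r (rename Fin.castSucc p) := by
  obtain ⟨a, s, ha, hs, hda, hds, rfl⟩ := hp
  refine ⟨rename Fin.castSucc a,
    Fin.lastCases 0 (fun j => rename Fin.castSucc (s j)),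
    isSOS_map (rename Fin.castSucc) ha, ?_, ?_, ?_, ?_⟩
  · intro i
    refine Fin.lastCases ?_ (fun j => ?_) i
    · simp only [Fin.lastCases_last]; exact isSOS_zero
    · simp only [Fin.lastCases_castSucc]; exact isSOS_map (rename Fin.castSucc) (hs j)
  · exact (totalDegree_rename_le _ _).trans hda
  · intro i
    refine Fin.lastCases ?_ (fun j => ?_) i
    · simp
    · simp only [Fin.lastCases_castSucc]
      have : rename Fin.castSucc (s j) * (X j.castSucc * (1 - X j.castSucc)) =
          rename Fin.castSucc (s j * (X j * (1 - X j))) := by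
        simp [map_mul, map_sub, map_one, rename_X]
      rw [this]
      exact (totalDegree_rename_le _ _).trans (hds j)
  · rw [map_add, map_sum, Fin.sum_univ_castSucc]
    simp only [Fin.lastCases_castSucc, Fin.lastCases_last, zero_mul, add_zero]
    congr 1
    refine Finset.sum_congr rfl fun j _ => ?_
    simp [map_mul, map_sub, map_one, rename_X]

/-- If for each `n ≥ 1` the constant `Cₙ ≤ 1` is such that `∏ Xᵢ + Cₙ` lies in
the quadratic module generated by `Xᵢ(1-Xᵢ)` with degree bound `2⌈n/2⌉`, then,
with `C'ₙ := ∑_{i=1}^n Cᵢ`, for every `n ≥ 1` the polynomial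
`1 - ∏ Xᵢ + C'ₙ` lies in the same quadratic module (degree bound `2⌈n/2⌉`). -/
theorem stmt_11 (C : ℕ → ℝ)
    (hC : ∀ n : ℕ, 1 ≤ n → C n ≤ 1 ∧
      InQM n (2 * ((n + 1) / 2)) ((∏ i, X i) + MvPolynomial.C (C n))) :
    ∀ n : ℕ, 1 ≤ n →
      InQM n (2 * ((n + 1) / 2))
        (1 - (∏ i, X i) + MvPolynomial.C (∑ i ∈ Finset.Icc 1 n, C i)) := by
  suffices h : ∀ n : ℕ, InQM n (2 * ((n + 1) / 2))
      (1 - (∏ i, X i) + MvPolynomial.C (∑ i ∈ Finset.Icc 1 n, C i)) from fun n _ => h n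
  intro n
  induction n with
  | zero =>
    have : (1 - (∏ i, X i) + MvPolynomial.C (∑ i ∈ Finset.Icc 1 0, C i)
        : MvPolynomial (Fin 0) ℝ) = 0 := by simp
    rw [this]
    exact ⟨0, Fin.elim0, isSOS_zero, fun i => i.elim0, by simp, fun i => i.elim0, by simp⟩
  | succ n ih =>
    -- the substitution map sending X_last ↦ 1 - X_last
    set φ : Fin (n + 1) → MvPolynomial (Fin (n + 1)) ℝ :=
      Fin.snoc (fun j : Fin n => X j.castSucc) (1 - X (Fin.last n)) with hφ
    have hφdeg : ∀ i, (φ i).totalDegree ≤ 1 := by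
      intro i
      refine Fin.lastCases ?_ (fun j => ?_) i
      · rw [hφ, Fin.snoc_last]
        refine le_trans (totalDegree_sub _ _) ?_
        simp [totalDegree_X, totalDegree_one]
      · rw [hφ, Fin.snoc_castSucc]
        simp [totalDegree_X]
    have hφg : ∀ i : Fin (n + 1),
        aeval φ ((X i * (1 - X i) : MvPolynomial (Fin (n + 1)) ℝ)) =
        (X i * (1 - X i) : MvPolynomial (Fin (n + 1)) ℝ) := by
      intro i
      refine Fin.lastCases ?_ (fun j => ?_) i <;>
        simp only [map_mul, map_sub, map_one, aeval_X, hφ, Fin.snoc_last, Fin.snoc_castSucc] <;>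
        ring
    -- part B : (1 - X_last) * ∏_{i<n} X_i + C (C (n+1))
    obtain ⟨-, hB⟩ := hC (n + 1) (by omega)
    obtain ⟨a, s, ha, hs, hda, hds, hEq⟩ := hB
    have hB' : InQM (n + 1) (2 * ((n + 1 + 1) / 2))
        ((∏ i : Fin n, X i.castSucc) * (1 - X (Fin.last n)) + MvPolynomial.C (C (n + 1))) := by
      refine ⟨aeval φ a, fun i => aeval φ (s i), isSOS_map (aeval φ) ha,
        fun i => isSOS_map (aeval φ) (hs i),
        (totalDegree_aeval_le φ hφdeg a).trans hda, fun i => ?_, ?_⟩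
      · have : aeval φ (s i) * (X i * (1 - X i)) = aeval φ (s i * (X i * (1 - X i))) := by
          rw [map_mul, hφg]
        rw [this]
        exact (totalDegree_aeval_le φ hφdeg _).trans (hds i)
      · have := congrArg (aeval φ) hEq
        rw [map_add, map_add, map_sum] at this
        simp only [map_mul, hφg, aeval_C] at this
        rw [← this]
        rw [map_prod]
        simp only [aeval_X]
        rw [Fin.prod_univ_castSucc]
        have hlast : φ (Fin.last n) = 1 - X (Fin.last n) := by
          rw [hφ, Fin.snoc_last]
        have hcs : ∀ j : Fin n, φ j.castSucc = X j.castSucc := by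
          intro j; rw [hφ, Fin.snoc_castSucc]
        rw [hlast, Finset.prod_congr rfl (fun j _ => hcs j)]
        simp [algebraMap_eq]
    -- part A : rename of the inductive hypothesis
    have hA : InQM (n + 1) (2 * ((n + 1 + 1) / 2))
        (1 - (∏ i : Fin n, X i.castSucc) + MvPolynomial.C (∑ i ∈ Finset.Icc 1 n, C i)) := by
      have := inQM_rename ih
      have heq : rename (Fin.castSucc) (1 - (∏ i : Fin n, X i)
          + MvPolynomial.C (∑ i ∈ Finset.Icc 1 n, C i)) =
          1 - (∏ i : Fin n, X i.castSucc) + MvPolynomial.C (∑ i ∈ Finset.Icc 1 n, C i) := by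
        rw [map_add, map_sub, map_one, map_prod, rename_C]
        simp [rename_X]
      rw [heq] at this
      exact inQM_mono (by omega) this
    have hsum := inQM_add hA hB'
    have hfinal : (1 - (∏ i : Fin n, X i.castSucc)
          + MvPolynomial.C (∑ i ∈ Finset.Icc 1 n, C i))
        + ((∏ i : Fin n, X i.castSucc) * (1 - X (Fin.last n)) + MvPolynomial.C (C (n + 1))) =
        1 - (∏ i : Fin (n + 1), X i) + MvPolynomial.C (∑ i ∈ Finset.Icc 1 (n + 1), C i) := by
      rw [Fin.prod_univ_castSucc, Finset.sum_Icc_succ_top (by omega : 1 ≤ n + 1), map_add]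
      ring
    rwa [hfinal] at hsum
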